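/- Let X, Y be measurable spaces, ℓ a positive integer, and for 1 ≤ i ≤ ℓ and n ∈ ℕ let ξ_i : Y → X, h_{i,n} : X → X and f_i : X → ℝ be measurable maps; set F_n(y) = Π_{i=1}^ℓ f_i(h_{i,n} ξ_i(y)) and let ν be a probability measure on Y such that every F_n is square integrable. Assume there exist M ≥ 1, δ > 1, functions b_{i,j} : ℕ × ℕ → [1, ∞] and c_{i,j} : ℕ → [1, ∞] (convention ∞^{−δ} = 0) such that: |∫_Y F_m F_n dν| ≤ M Σ_{i,j=1}^ℓ (b_{i,j}(m,n)^{−δ} + c_{i,j}(m)^{−δ} + c_{i,j}(n)^{−δ}) for all m, n ∈ ℕ; |{k ∈ ℕ : c_{i,j}(k) ≤ n}| ≤ M n for all i, j, n; and |{k ∈ ℕ : b_{i,j}(m,k) ≤ n}| ≤ M n for all i, j, m, n. Then for all nonnegative integers m < n, ∫_Y (Σ_{m < k ≤ n} F_k(y))² dν(y) ≤ 4^{1+δ} M^{1+δ} (δ − 1)^{−1} ℓ² (n − m). -/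

import Mathlib

open MeasureTheory
open scoped ENNReal

private lemma zeta_aux {δ : ℝ} (hδ : 1 < δ) (N : ℕ) :
    ∑ r ∈ Finset.Icc 1 N, (r : ℝ) ^ (-δ) + (N : ℝ) ^ (1 - δ) / (δ - 1) ≤ δ / (δ - 1) := by
  have hδ1 : (0:ℝ) < δ - 1 := by linarith
  induction N with
  | zero =>
      rw [show Finset.Icc 1 0 = (∅ : Finset ℕ) by rfl]
      rw [Finset.sum_empty, Nat.cast_zero, Real.zero_rpow (by linarith : (1:ℝ) - δ ≠ 0)]
      rw [zero_add, zero_div]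
      positivity
  | succ N ih =>
      rw [Finset.sum_Icc_succ_top (by omega : 1 ≤ N + 1)]
      rcases Nat.eq_zero_or_pos N with rfl | hN
      · norm_num
        have hne : δ - 1 ≠ 0 := hδ1.ne'
        apply le_of_eq
        field_simp
        ring
      · have hx1 : (1:ℝ) ≤ (N:ℝ) := by exact_mod_cast hN
        have hx0 : (0:ℝ) < (N:ℝ) := by linarith
        have hx10 : (0:ℝ) < (N:ℝ) + 1 := by linarith
        have hA : (0:ℝ) < (N:ℝ) ^ δ := Real.rpow_pos_of_pos hx0 δ
        have hB : (0:ℝ) < ((N:ℝ) + 1) ^ δ := Real.rpow_pos_of_pos hx10 δ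
        have hber : 1 + δ * (1 / (N:ℝ)) ≤ (1 + 1 / (N:ℝ)) ^ δ :=
          one_add_mul_self_le_rpow_one_add
            (le_trans (by norm_num) (by positivity : (0:ℝ) ≤ 1 / (N:ℝ))) hδ.le
        have h1 : (1 + 1 / (N:ℝ)) = ((N:ℝ) + 1) / N := by field_simp
        have h2 : (((N:ℝ) + 1) / N) ^ δ = ((N:ℝ) + 1) ^ δ / (N:ℝ) ^ δ :=
          Real.div_rpow (by positivity) (by positivity) δ
        rw [h1, h2] at hber
        have hkey : (N:ℝ) ^ δ * ((N:ℝ) + δ) ≤ ((N:ℝ) + 1) ^ δ * N := by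
          have h3 : ((N:ℝ) + δ) / N ≤ ((N:ℝ) + 1) ^ δ / (N:ℝ) ^ δ := by
            have h4 : ((N:ℝ) + δ) / N = 1 + δ * (1 / (N:ℝ)) := by field_simp
            rw [h4]; exact hber
          rw [div_le_div_iff₀ hx0 hA] at h3
          nlinarith [h3]
        have goal2 : ((N:ℝ) + 1) ^ (-δ) + ((N:ℝ) + 1) ^ (1 - δ) / (δ - 1) ≤
            (N:ℝ) ^ (1 - δ) / (δ - 1) := by
          rw [Real.rpow_sub hx0, Real.rpow_sub hx10, Real.rpow_one, Real.rpow_one,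
            Real.rpow_neg hx10.le]
          rw [div_div, div_div, inv_eq_one_div, div_add_div _ _ (by positivity)
            (by positivity), div_le_div_iff₀ (by positivity) (by positivity)]
          nlinarith [mul_le_mul_of_nonneg_right hkey
            (by positivity : (0:ℝ) ≤ ((N:ℝ)+1)^δ * (δ-1)), hA, hB, hδ1]
        push_cast
        linarith [ih, goal2]

private lemma zeta_bound {δ : ℝ} (hδ : 1 < δ) (N : ℕ) :
    ∑ r ∈ Finset.Icc 1 N, (r : ℝ) ^ (-δ) ≤ δ / (δ - 1) := by
  have h := zeta_aux hδ N
  have h2 : (0:ℝ) ≤ (N : ℝ) ^ (1 - δ) / (δ - 1) :=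
    div_nonneg (Real.rpow_nonneg (Nat.cast_nonneg N) _) (by linarith)
  linarith

private lemma rank_sum_bound {M δ : ℝ} (hM : 1 ≤ M) (hδ : 1 < δ)
    (g : ℕ → ℝ≥0∞) (hg1 : ∀ k, 1 ≤ g k)
    (hcard : ∀ n : ℕ, 1 ≤ n → ∀ s : Finset ℕ,
      (∀ k ∈ s, 1 ≤ k ∧ g k ≤ (n : ℝ≥0∞)) → (s.card : ℝ) ≤ M * n) :
    ∀ (N : ℕ) (s : Finset ℕ), s.card = N → (∀ k ∈ s, 1 ≤ k) →
      ∑ k ∈ s, ((g k) ^ (-δ)).toReal ≤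
        (2 * M) ^ δ * ∑ r ∈ Finset.Icc 1 N, (r : ℝ) ^ (-δ) := by
  have hM0 : (0:ℝ) < 2 * M := by linarith
  intro N
  induction N with
  | zero =>
      intro s hs _
      rw [Finset.card_eq_zero.mp hs]
      simp
  | succ N ih =>
      intro s hs hks
      have hne : s.Nonempty := Finset.card_pos.mp (by omega)
      obtain ⟨k₀, hk₀s, hmax⟩ := s.exists_max_image g hne
      have hcerase : (s.erase k₀).card = N := by
        rw [Finset.card_erase_of_mem hk₀s, hs]
        omega
      have hih := ih (s.erase k₀) hcerase (fun k hk => hks k (Finset.mem_of_mem_erase hk))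
      have hclaim : ((g k₀) ^ (-δ)).toReal ≤ (2 * M) ^ δ * ((N:ℝ) + 1) ^ (-δ) := by
        by_cases htop : g k₀ = ⊤
        · rw [htop, ENNReal.top_rpow_of_neg (by linarith : -δ < 0)]
          simp only [ENNReal.toReal_zero]
          positivity
        · set x : ℝ := (g k₀).toReal with hxdef
          have hx1 : (1:ℝ) ≤ x := by
            have := ENNReal.toReal_mono htop (hg1 k₀)
            simpa using this
          have hx0 : (0:ℝ) < x := by linarith
          have hceil1 : 1 ≤ ⌈x⌉₊ := Nat.one_le_ceil_iff.mpr hx0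
          have hle : ∀ k ∈ s, g k ≤ (⌈x⌉₊ : ℝ≥0∞) := by
            intro k hk
            refine (hmax k hk).trans ?_
            conv_lhs => rw [← ENNReal.ofReal_toReal htop]
            rw [← ENNReal.ofReal_natCast]
            exact ENNReal.ofReal_le_ofReal (Nat.le_ceil x)
          have hcount : ((s.card : ℝ)) ≤ M * ⌈x⌉₊ :=
            hcard ⌈x⌉₊ hceil1 s (fun k hk => ⟨hks k hk, hle k hk⟩)
          have hceilx : (⌈x⌉₊ : ℝ) ≤ x + 1 := (Nat.ceil_lt_add_one hx0.le).le
          have hNx : ((N:ℝ) + 1) ≤ 2 * M * x := by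
            rw [hs] at hcount
            push_cast at hcount
            nlinarith [hcount, hceilx, hx1, hM]
          have hdiv : ((N:ℝ) + 1) / (2 * M) ≤ x := by
            rw [div_le_iff₀ hM0]; nlinarith [hNx]
          have hterm : ((g k₀) ^ (-δ)).toReal = x ^ (-δ) := by
            rw [ENNReal.toReal_rpow]
          rw [hterm]
          have hmono : x ^ (-δ) ≤ (((N:ℝ) + 1) / (2 * M)) ^ (-δ) :=
            Real.rpow_le_rpow_of_nonpos (by positivity) hdiv (by linarith)
          refine hmono.trans (le_of_eq ?_)
          rw [Real.div_rpow (by positivity) hM0.le, Real.rpow_neg hM0.le δ, div_eq_mul_inv, inv_inv, mul_comm]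
      calc ∑ k ∈ s, ((g k) ^ (-δ)).toReal
          = ((g k₀) ^ (-δ)).toReal + ∑ k ∈ s.erase k₀, ((g k) ^ (-δ)).toReal :=
            (Finset.add_sum_erase s _ hk₀s).symm
        _ ≤ (2 * M) ^ δ * ((N:ℝ) + 1) ^ (-δ) +
            (2 * M) ^ δ * ∑ r ∈ Finset.Icc 1 N, (r : ℝ) ^ (-δ) := add_le_add hclaim hih
        _ = (2 * M) ^ δ * ∑ r ∈ Finset.Icc 1 (N + 1), (r : ℝ) ^ (-δ) := by
            rw [Finset.sum_Icc_succ_top (by omega : 1 ≤ N + 1)]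
            push_cast
            ring

private lemma sum_swap4 {α : Type*} (u : Finset α) (s : Finset ℕ) (T : α → α → ℕ → ℕ → ℝ) :
    ∑ k ∈ s, ∑ k' ∈ s, ∑ i ∈ u, ∑ j ∈ u, T i j k k' =
    ∑ i ∈ u, ∑ j ∈ u, ∑ k ∈ s, ∑ k' ∈ s, T i j k k' :=
  calc ∑ k ∈ s, ∑ k' ∈ s, ∑ i ∈ u, ∑ j ∈ u, T i j k k'
      = ∑ k ∈ s, ∑ i ∈ u, ∑ k' ∈ s, ∑ j ∈ u, T i j k k' :=
        Finset.sum_congr rfl fun k _ => Finset.sum_comm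
    _ = ∑ i ∈ u, ∑ k ∈ s, ∑ k' ∈ s, ∑ j ∈ u, T i j k k' := Finset.sum_comm
    _ = ∑ i ∈ u, ∑ k ∈ s, ∑ j ∈ u, ∑ k' ∈ s, T i j k k' :=
        Finset.sum_congr rfl fun i _ => Finset.sum_congr rfl fun k _ => Finset.sum_comm
    _ = ∑ i ∈ u, ∑ j ∈ u, ∑ k ∈ s, ∑ k' ∈ s, T i j k k' :=
        Finset.sum_congr rfl fun i _ => Finset.sum_comm

theorem second_moment_bound_delta_gt_one
    {X Y : Type*} [MeasurableSpace X] [MeasurableSpace Y]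
    (ν : Measure Y) [IsProbabilityMeasure ν]
    (ℓ : ℕ) (hℓ : 1 ≤ ℓ)
    (ξ : Fin ℓ → Y → X) (hξ : ∀ i, Measurable (ξ i))
    (h : Fin ℓ → ℕ → X → X) (hh : ∀ i n, Measurable (h i n))
    (f : Fin ℓ → X → ℝ) (hf : ∀ i, Measurable (f i))
    (F : ℕ → Y → ℝ) (hF : ∀ n y, F n y = ∏ i, f i (h i n (ξ i y)))
    (hFL2 : ∀ n : ℕ, 1 ≤ n → MemLp (F n) 2 ν)
    (M δ : ℝ) (hM : 1 ≤ M) (hδ : 1 < δ)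
    (b : Fin ℓ → Fin ℓ → ℕ → ℕ → ℝ≥0∞) (hb1 : ∀ i j m n, 1 ≤ b i j m n)
    (c : Fin ℓ → Fin ℓ → ℕ → ℝ≥0∞) (hc1 : ∀ i j n, 1 ≤ c i j n)
    (hcorr : ∀ m n : ℕ, 1 ≤ m → 1 ≤ n →
      |∫ y, F m y * F n y ∂ν| ≤
        M * ∑ i, ∑ j, ((b i j m n ^ (-δ)).toReal + (c i j m ^ (-δ)).toReal +
          (c i j n ^ (-δ)).toReal))
    (hccard : ∀ i j, ∀ n : ℕ, 1 ≤ n → ∀ s : Finset ℕ,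
      (∀ k ∈ s, 1 ≤ k ∧ c i j k ≤ (n : ℝ≥0∞)) → (s.card : ℝ) ≤ M * n)
    (hbcard : ∀ i j, ∀ m n : ℕ, 1 ≤ m → 1 ≤ n → ∀ s : Finset ℕ,
      (∀ k ∈ s, 1 ≤ k ∧ b i j m k ≤ (n : ℝ≥0∞)) → (s.card : ℝ) ≤ M * n) :
    ∀ m n : ℕ, m < n →
      ∫ y, (∑ k ∈ Finset.Ioc m n, F k y) ^ 2 ∂ν ≤
        (4 : ℝ) ^ (1 + δ) * M ^ (1 + δ) * (δ - 1)⁻¹ * (ℓ : ℝ) ^ 2 *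
          ((n : ℝ) - (m : ℝ)) := by
  intro m n hmn
  set s : Finset ℕ := Finset.Ioc m n with hsdef
  have hsk : ∀ k ∈ s, 1 ≤ k := by
    intro k hk
    have := (Finset.mem_Ioc.mp hk).1
    omega
  have hscard : (s.card : ℝ) = (n : ℝ) - m := by
    rw [hsdef, Nat.card_Ioc, Nat.cast_sub hmn.le]
  have hδ1 : (0:ℝ) < δ - 1 := by linarith
  have hM0 : (0:ℝ) < M := by linarith
  set K : ℝ := (2 * M) ^ δ * (δ / (δ - 1)) with hK
  set T : Fin ℓ → Fin ℓ → ℕ → ℕ → ℝ := fun i j k k' =>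
    ((b i j k k' ^ (-δ)).toReal + (c i j k ^ (-δ)).toReal + (c i j k' ^ (-δ)).toReal)
    with hT
  -- per-(i,j) sum bounds from counting hypotheses
  have hbB : ∀ i j, ∀ k ∈ s, ∑ k' ∈ s, ((b i j k k') ^ (-δ)).toReal ≤ K := by
    intro i j k hk
    have hr := rank_sum_bound hM hδ (b i j k) (hb1 i j k)
      (fun n' hn' t ht => hbcard i j k n' (hsk k hk) hn' t ht) s.card s rfl hsk
    exact hr.trans (mul_le_mul_of_nonneg_left (zeta_bound hδ s.card) (by positivity))
  have hcB : ∀ i j, ∑ k ∈ s, ((c i j k) ^ (-δ)).toReal ≤ K := by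
    intro i j
    have hr := rank_sum_bound hM hδ (c i j) (hc1 i j)
      (fun n' hn' t ht => hccard i j n' hn' t ht) s.card s rfl hsk
    exact hr.trans (mul_le_mul_of_nonneg_left (zeta_bound hδ s.card) (by positivity))
  -- integrability of products
  have hint : ∀ k ∈ s, ∀ k' ∈ s, Integrable (fun y => F k y * F k' y) ν := by
    intro k hk k' hk'
    have h1 := hFL2 k (hsk k hk)
    have h2 := hFL2 k' (hsk k' hk')
    have hpqr : (1 : ℝ≥0∞) / 1 = 1 / 2 + 1 / 2 := by
      rw [ENNReal.add_halves]
      simp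
    have hm : MemLp (F k • F k') 1 ν := h2.smul h1 (hpqr := ⟨by simp only [one_div] at hpqr; exact hpqr.symm⟩)
    exact memLp_one_iff_integrable.mp hm
  -- expand the square
  have hexp : ∫ y, (∑ k ∈ s, F k y) ^ 2 ∂ν =
      ∑ k ∈ s, ∑ k' ∈ s, ∫ y, F k y * F k' y ∂ν := by
    have hpt : ∀ y, (∑ k ∈ s, F k y) ^ 2 = ∑ k ∈ s, ∑ k' ∈ s, F k y * F k' y := by
      intro y
      rw [sq, Finset.sum_mul_sum]
    simp_rw [hpt]
    rw [integral_finset_sum _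
      (fun k hk => integrable_finset_sum _ (fun k' hk' => hint k hk k' hk'))]
    exact Finset.sum_congr rfl fun k hk =>
      integral_finset_sum _ (fun k' hk' => hint k hk k' hk')
  -- bound by correlations
  have habs : ∑ k ∈ s, ∑ k' ∈ s, ∫ y, F k y * F k' y ∂ν ≤
      M * ∑ i, ∑ j, ∑ k ∈ s, ∑ k' ∈ s, T i j k k' := by
    have step1 : ∑ k ∈ s, ∑ k' ∈ s, ∫ y, F k y * F k' y ∂ν ≤
        ∑ k ∈ s, ∑ k' ∈ s, M * ∑ i, ∑ j, T i j k k' := by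
      refine Finset.sum_le_sum fun k hk => Finset.sum_le_sum fun k' hk' => ?_
      exact (le_abs_self _).trans (hcorr k k' (hsk k hk) (hsk k' hk'))
    refine step1.trans (le_of_eq ?_)
    calc ∑ k ∈ s, ∑ k' ∈ s, M * ∑ i, ∑ j, T i j k k'
        = M * ∑ k ∈ s, ∑ k' ∈ s, ∑ i, ∑ j, T i j k k' := by
          rw [Finset.mul_sum]
          exact Finset.sum_congr rfl fun k _ => (Finset.mul_sum _ _ _).symm
      _ = M * ∑ i, ∑ j, ∑ k ∈ s, ∑ k' ∈ s, T i j k k' := by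
          rw [sum_swap4]
  -- bound the inner double sums
  have hinner : ∀ i j, ∑ k ∈ s, ∑ k' ∈ s, T i j k k' ≤ 3 * ((s.card : ℝ) * K) := by
    intro i j
    have hsplit : ∑ k ∈ s, ∑ k' ∈ s, T i j k k' =
        (∑ k ∈ s, ∑ k' ∈ s, ((b i j k k') ^ (-δ)).toReal)
        + (∑ k ∈ s, ∑ k' ∈ s, ((c i j k) ^ (-δ)).toReal)
        + (∑ k ∈ s, ∑ k' ∈ s, ((c i j k') ^ (-δ)).toReal) := by
      simp only [hT, Finset.sum_add_distrib]
    have hA : ∑ k ∈ s, ∑ k' ∈ s, ((b i j k k') ^ (-δ)).toReal ≤ (s.card : ℝ) * K := by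
      calc ∑ k ∈ s, ∑ k' ∈ s, ((b i j k k') ^ (-δ)).toReal
          ≤ ∑ _k ∈ s, K := Finset.sum_le_sum fun k hk => hbB i j k hk
        _ = (s.card : ℝ) * K := by rw [Finset.sum_const, nsmul_eq_mul]
    have hBt : ∑ k ∈ s, ∑ k' ∈ s, ((c i j k) ^ (-δ)).toReal ≤ (s.card : ℝ) * K := by
      have hc2 : ∀ k ∈ s, ∑ _k' ∈ s, ((c i j k) ^ (-δ)).toReal =
          (s.card : ℝ) * ((c i j k) ^ (-δ)).toReal := by
        intro k _
        rw [Finset.sum_const, nsmul_eq_mul]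
      rw [Finset.sum_congr rfl hc2, ← Finset.mul_sum]
      exact mul_le_mul_of_nonneg_left (hcB i j) (Nat.cast_nonneg _)
    have hCt : ∑ k ∈ s, ∑ k' ∈ s, ((c i j k') ^ (-δ)).toReal ≤ (s.card : ℝ) * K := by
      calc ∑ k ∈ s, ∑ k' ∈ s, ((c i j k') ^ (-δ)).toReal
          ≤ ∑ _k ∈ s, K := Finset.sum_le_sum fun k _ => hcB i j
        _ = (s.card : ℝ) * K := by rw [Finset.sum_const, nsmul_eq_mul]
    rw [hsplit]
    linarith
  have htot : M * ∑ i, ∑ j, ∑ k ∈ s, ∑ k' ∈ s, T i j k k' ≤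
      M * ((ℓ:ℝ)^2 * (3 * ((s.card:ℝ) * K))) := by
    refine mul_le_mul_of_nonneg_left ?_ hM0.le
    calc ∑ i, ∑ j, ∑ k ∈ s, ∑ k' ∈ s, T i j k k'
        ≤ ∑ _i : Fin ℓ, ∑ _j : Fin ℓ, 3 * ((s.card:ℝ) * K) :=
          Finset.sum_le_sum fun i _ => Finset.sum_le_sum fun j _ => hinner i j
      _ = (ℓ:ℝ)^2 * (3 * ((s.card:ℝ) * K)) := by
          simp [Finset.sum_const, Finset.card_univ]
          ring
  -- numeric core inequality
  have h2δ : δ ≤ (2:ℝ) ^ δ := by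
    have hlog : (0.6931471803 : ℝ) < Real.log 2 := Real.log_two_gt_d9
    have hexp1 : (2.7182818283 : ℝ) < Real.exp 1 := Real.exp_one_gt_d9
    have hrw : (2:ℝ) ^ δ = Real.exp (Real.log 2 * δ) := by
      rw [Real.rpow_def_of_pos (by norm_num)]
    have hb' : Real.log 2 * δ ≤ Real.exp (Real.log 2 * δ - 1) := by
      linarith [Real.add_one_le_exp (Real.log 2 * δ - 1)]
    have hsplit : Real.exp (Real.log 2 * δ) =
        Real.exp 1 * Real.exp (Real.log 2 * δ - 1) := by
      rw [← Real.exp_add]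
      ring_nf
    have hmul : Real.exp 1 * (Real.log 2 * δ) ≤
        Real.exp 1 * Real.exp (Real.log 2 * δ - 1) :=
      mul_le_mul_of_nonneg_left hb' (Real.exp_pos 1).le
    have heL : (1:ℝ) ≤ Real.exp 1 * Real.log 2 := by nlinarith [hexp1, hlog]
    have h5 : δ ≤ Real.exp 1 * (Real.log 2 * δ) := by nlinarith [heL, hδ]
    rw [hrw, hsplit]
    linarith [hmul, h5]
  have hcore : 3 * M * K ≤ (4:ℝ)^(1+δ) * M^(1+δ) * (δ-1)⁻¹ := by
    have e1 : (2*M)^δ = (2:ℝ)^δ * M^δ := Real.mul_rpow (by norm_num) hM0.le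
    have e2 : M^(1+δ) = M * M^δ := by rw [Real.rpow_add hM0, Real.rpow_one]
    have e3 : (4:ℝ)^(1+δ) = 4 * ((2:ℝ)^δ * (2:ℝ)^δ) := by
      rw [Real.rpow_add (by norm_num : (0:ℝ) < 4), Real.rpow_one,
        show (4:ℝ) = 2*2 by norm_num, Real.mul_rpow (by norm_num) (by norm_num)]
    have hMδ : (0:ℝ) < M^δ := Real.rpow_pos_of_pos hM0 δ
    have h2δ0 : (0:ℝ) < (2:ℝ)^δ := Real.rpow_pos_of_pos two_pos δ
    have h3 : 3 * δ ≤ 4 * (2:ℝ)^δ := by nlinarith [h2δ, hδ]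
    have hmul2 : 3*δ * (M * M^δ * (2:ℝ)^δ * (δ-1)⁻¹) ≤
        4 * (2:ℝ)^δ * (M * M^δ * (2:ℝ)^δ * (δ-1)⁻¹) :=
      mul_le_mul_of_nonneg_right h3 (by positivity)
    calc 3 * M * K = 3*δ * (M * M^δ * (2:ℝ)^δ * (δ-1)⁻¹) := by
          rw [hK, e1]; field_simp
      _ ≤ 4 * (2:ℝ)^δ * (M * M^δ * (2:ℝ)^δ * (δ-1)⁻¹) := hmul2
      _ = (4:ℝ)^(1+δ) * M^(1+δ) * (δ-1)⁻¹ := by rw [e2, e3]; ring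
  have hfinal : M * ((ℓ:ℝ)^2 * (3 * ((s.card:ℝ) * K))) ≤
      (4:ℝ)^(1+δ) * M^(1+δ) * (δ-1)⁻¹ * (ℓ:ℝ)^2 * ((n:ℝ) - m) := by
    have hN0 : (0:ℝ) ≤ (s.card : ℝ) := Nat.cast_nonneg _
    calc M * ((ℓ:ℝ)^2 * (3 * ((s.card:ℝ) * K)))
        = (3*M*K) * ((ℓ:ℝ)^2 * (s.card:ℝ)) := by ring
      _ ≤ ((4:ℝ)^(1+δ) * M^(1+δ) * (δ-1)⁻¹) * ((ℓ:ℝ)^2 * (s.card:ℝ)) :=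
          mul_le_mul_of_nonneg_right hcore (by positivity)
      _ = (4:ℝ)^(1+δ) * M^(1+δ) * (δ-1)⁻¹ * (ℓ:ℝ)^2 * ((n:ℝ) - m) := by
          rw [hscard]; ring
  rw [hexp]
  exact habs.trans (htot.trans hfinal)
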